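/- The function H ↦ ρ(H) = (-3^{2H} + 2^{2H+2} - 7)/(8 - 2^{2H+1}) is strictly monotone increasing on (0,1). -/

import Mathlib

open Real Set

noncomputable def rhoH (H : ℝ) : ℝ :=
  (-(3:ℝ)^(2*H) + 4*(4:ℝ)^H - 7) / (8 - 2*(4:ℝ)^H)

noncomputable def Qfun (H : ℝ) : ℝ :=
  18 * Real.log 4 * Real.exp (-(Real.log 9 * H)) + 2 * (Real.log 9 - Real.log 4)
    - 8 * Real.log 9 * Real.exp (-(Real.log 4 * H))

lemma ha_pos : 0 < Real.log 4 := Real.log_pos (by norm_num)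
lemma hb_pos : 0 < Real.log 9 := Real.log_pos (by norm_num)
lemma hab : Real.log 4 < Real.log 9 := Real.log_lt_log (by norm_num) (by norm_num)

lemma Q_anti : StrictAntiOn Qfun (Set.Icc (0:ℝ) 1) := by
  set a := Real.log 4
  set b := Real.log 9
  apply strictAntiOn_of_deriv_neg (convex_Icc 0 1)
  · unfold Qfun; fun_prop
  · intro x hx
    rw [interior_Icc] at hx
    have hb' : HasDerivAt (fun y : ℝ => Real.exp (-(b*y))) (Real.exp (-(b*x)) * -(b*1)) x :=
      (((hasDerivAt_id x).const_mul b).neg).exp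
    have ha' : HasDerivAt (fun y : ℝ => Real.exp (-(a*y))) (Real.exp (-(a*x)) * -(a*1)) x :=
      (((hasDerivAt_id x).const_mul a).neg).exp
    have hQ : HasDerivAt Qfun
        ((18*a) * (Real.exp (-(b*x)) * -(b*1)) - (8*b) * (Real.exp (-(a*x)) * -(a*1))) x := by
      exact ((hb'.const_mul (18*a)).add_const (2*(b-a))).sub (ha'.const_mul (8*b))
    rw [hQ.deriv]
    have key : 8 * Real.exp (-(a*x)) < 18 * Real.exp (-(b*x)) := by
      have h94 : Real.exp (b - a) = 9/4 := by
        rw [Real.exp_sub, Real.exp_log (by norm_num : (0:ℝ)<9), Real.exp_log (by norm_num : (0:ℝ)<4)]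
      have : Real.exp (-(a*x)) < Real.exp (b - a) * Real.exp (-(b*x)) := by
        rw [← Real.exp_add, Real.exp_lt_exp]
        nlinarith [hx.1, hx.2, hab]
      rw [h94] at this
      nlinarith [Real.exp_pos (-(b*x))]
    nlinarith [ha_pos, hb_pos, mul_pos ha_pos hb_pos]

lemma Q_one : Qfun 1 = 0 := by
  unfold Qfun
  rw [mul_one, mul_one, Real.exp_neg, Real.exp_neg,
    Real.exp_log (by norm_num : (0:ℝ)<9), Real.exp_log (by norm_num : (0:ℝ)<4)]
  ring

lemma Q_pos {H : ℝ} (h : H ∈ Set.Ioo (0:ℝ) 1) : 0 < Qfun H := by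
  have := Q_anti (Set.mem_Icc.2 ⟨le_of_lt h.1, le_of_lt h.2⟩)
    (Set.mem_Icc.2 ⟨by norm_num, le_refl 1⟩) h.2
  rw [Q_one] at this
  linarith

lemma rho_eq : rhoH = fun H : ℝ =>
    (-(Real.exp (Real.log 9 * H)) + 4*Real.exp (Real.log 4 * H) - 7)
      / (8 - 2*Real.exp (Real.log 4 * H)) := by
  funext H
  unfold rhoH
  have h9 : (3:ℝ)^(2*H) = Real.exp (Real.log 9 * H) := by
    rw [← Real.exp_log (show (0:ℝ) < (3:ℝ)^(2*H) from Real.rpow_pos_of_pos (by norm_num) _),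
      Real.log_rpow (by norm_num)]
    congr 1
    rw [show Real.log 9 = Real.log (3^(2:ℕ)) by norm_num, Real.log_pow]
    push_cast; ring
  have h4 : (4:ℝ)^H = Real.exp (Real.log 4 * H) := by
    rw [Real.rpow_def_of_pos (by norm_num)]
  rw [h9, h4]

lemma denom_pos {x : ℝ} (hx : x ∈ Set.Ioo (0:ℝ) 1) :
    0 < 8 - 2*Real.exp (Real.log 4 * x) := by
  have : Real.exp (Real.log 4 * x) < Real.exp (Real.log 4) := by
    rw [Real.exp_lt_exp]
    nlinarith [ha_pos, hx.2, hx.1]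
  rw [Real.exp_log (by norm_num : (0:ℝ)<4)] at this
  linarith

theorem rho_strictMonoOn : StrictMonoOn rhoH (Set.Ioo (0:ℝ) 1) := by
  rw [rho_eq]
  set a := Real.log 4
  set b := Real.log 9
  apply strictMonoOn_of_deriv_pos (convex_Ioo 0 1)
  · apply ContinuousOn.div
    · fun_prop
    · fun_prop
    · exact fun x hx => ne_of_gt (denom_pos hx)
  · intro x hx
    rw [interior_Ioo] at hx
    have hvb : HasDerivAt (fun y : ℝ => Real.exp (b*y)) (Real.exp (b*x) * (b*1)) x :=
      ((hasDerivAt_id x).const_mul b).exp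
    have hva : HasDerivAt (fun y : ℝ => Real.exp (a*y)) (Real.exp (a*x) * (a*1)) x :=
      ((hasDerivAt_id x).const_mul a).exp
    have hN : HasDerivAt (fun y : ℝ => -(Real.exp (b*y)) + 4*Real.exp (a*y) - 7)
        (-(Real.exp (b*x) * (b*1)) + 4*(Real.exp (a*x) * (a*1))) x :=
      (hvb.neg.add (hva.const_mul 4)).sub_const 7
    have hD : HasDerivAt (fun y : ℝ => 8 - 2*Real.exp (a*y))
        (-(2*(Real.exp (a*x) * (a*1)))) x :=
      (hva.const_mul 2).const_sub 8
    have hne : 8 - 2*Real.exp (a*x) ≠ 0 := ne_of_gt (denom_pos hx)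
    have hF := hN.div hD hne
    rw [show (fun H => (-(Real.exp (b*H)) + 4*Real.exp (a*H) - 7) / (8 - 2*Real.exp (a*H))) = ((fun y : ℝ => -(Real.exp (b*y)) + 4*Real.exp (a*y) - 7) / fun y : ℝ => 8 - 2*Real.exp (a*y)) from rfl, hF.deriv]
    apply div_pos _ (by positivity)
    have hiden : (-(Real.exp (b*x) * (b*1)) + 4*(Real.exp (a*x) * (a*1))) * (8 - 2*Real.exp (a*x))
        - (-(Real.exp (b*x)) + 4*Real.exp (a*x) - 7) * -(2*(Real.exp (a*x) * (a*1)))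
        = Real.exp (a*x) * Real.exp (b*x) * Qfun x := by
      unfold Qfun
      rw [show Real.log 9 = b from rfl, show Real.log 4 = a from rfl]
      rw [Real.exp_neg, Real.exp_neg]
      have hu := Real.exp_ne_zero (a*x)
      have hv := Real.exp_ne_zero (b*x)
      field_simp
      ring
    rw [hiden]
    have := Q_pos hx
    positivity
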